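/- Let α,γ,ε ∈ ℝ and let (m₁,m₂,m₃,p₁,p₂,p₃) and (m̃₁,m̃₂,m̃₃,p̃₁,p̃₂,p̃₃) in ℝ⁶ satisfy the dLT equations: m̃₁ − m₁ = ε(α−1)(m̃₂m₃ + m₂m̃₃) + εγ(p₂ + p̃₂), m̃₂ − m₂ = ε(1−α)(m̃₁m₃ + m₁m̃₃) − εγ(p₁ + p̃₁), m̃₃ = m₃, p̃₁ − p₁ = εα(p₂m̃₃ + p̃₂m₃) − ε(p₃m̃₂ + p̃₃m₂), p̃₂ − p₂ = ε(p₃m̃₁ + p̃₃m₁) − εα(p₁m̃₃ + p̃₁m₃), p̃₃ − p₃ = ε(p₁m̃₂ + p̃₁m₂ − p₂m̃₁ − p̃₂m₁). Set Δ₁ = 1 + ε²α(1−α)m₃² − ε²γp₃ and b₃ = ((2α−1)m₃ + ε²(α−1)m₃(m₁²+m₂²) + ε²γ(m₁p₁+m₂p₂))/(m₃Δ₁). Assume m₃ ≠ 0, Δ₁ ≠ 0, and Δ̃₁ = 1 + ε²α(1−α)m₃² − ε²γp̃₃ ≠ 0. Then (m̃₁p₁ − m₁p̃₁) + (m̃₂p₂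 − m₂p̃₂) + b₃(m̃₃p₃ − m₃p̃₃) = 0, and b₃ is a conserved quantity: b₃(m̃,p̃) = b₃(m,p). -/

import Mathlib

/-- The conserved quantity `b₃` of the Hirota–Kimura discretization dLT of the
Lagrange top. -/
noncomputable def dLTb3 (α γ ε m1 m2 m3 p1 p2 p3 : ℝ) : ℝ :=
  ((2 * α - 1) * m3 + ε ^ 2 * (α - 1) * m3 * (m1 ^ 2 + m2 ^ 2)
      + ε ^ 2 * γ * (m1 * p1 + m2 * p2))
    / (m3 * (1 + ε ^ 2 * α * (1 - α) * m3 ^ 2 - ε ^ 2 * γ * p3))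

set_option maxRecDepth 8000 in
set_option maxHeartbeats 4000000 in
/-- Discrete Wronskian relation and conserved quantity `b₃` for the
Hirota–Kimura discretization dLT of the Lagrange top. -/
theorem dLT_Wronskian_and_b3
    (α γ ε m1 m2 m3 p1 p2 p3 mt1 mt2 mt3 pt1 pt2 pt3 : ℝ)
    (hm1 : mt1 - m1 = ε * (α - 1) * (mt2 * m3 + m2 * mt3) + ε * γ * (p2 + pt2))
    (hm2 : mt2 - m2 = ε * (1 - α) * (mt1 * m3 + m1 * mt3) - ε * γ * (p1 + pt1))
    (hm3 : mt3 = m3)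
    (hp1 : pt1 - p1 = ε * α * (p2 * mt3 + pt2 * m3) - ε * (p3 * mt2 + pt3 * m2))
    (hp2 : pt2 - p2 = ε * (p3 * mt1 + pt3 * m1) - ε * α * (p1 * mt3 + pt1 * m3))
    (hp3 : pt3 - p3 = ε * (p1 * mt2 + pt1 * m2 - p2 * mt1 - pt2 * m1))
    (hm3ne : m3 ≠ 0)
    (hΔ : 1 + ε ^ 2 * α * (1 - α) * m3 ^ 2 - ε ^ 2 * γ * p3 ≠ 0)
    (hΔt : 1 + ε ^ 2 * α * (1 - α) * m3 ^ 2 - ε ^ 2 * γ * pt3 ≠ 0) :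
    (mt1 * p1 - m1 * pt1) + (mt2 * p2 - m2 * pt2)
        + dLTb3 α γ ε m1 m2 m3 p1 p2 p3 * (mt3 * p3 - m3 * pt3) = 0 ∧
    dLTb3 α γ ε mt1 mt2 mt3 pt1 pt2 pt3 = dLTb3 α γ ε m1 m2 m3 p1 p2 p3 := by
  subst hm3
  have hF1 : ((1 + ε ^ 2*α*(1 - α)*mt3 ^ 2 - ε ^ 2*γ*p3) ^ 2 + ε ^ 2*mt3 ^ 2*(2*α - 1) ^ 2) * mt1 = (m1 - 2*ε*m2*mt3 - ε ^ 2*m1*mt3 ^ 2 + 2*γ*ε*p2 + 2*γ*ε ^ 2*mt3*p1 + γ*ε ^ 2*m1*pt3 - γ*ε ^ 2*m1*p3 - γ*ε ^ 3*m2*mt3*pt3 + γ*ε ^ 3*m2*mt3*p3 - 2*γ ^ 2*ε ^ 3*p2*p3 - γ ^ 2*ε ^ 4*m1*p3*pt3 + 2*α*ε*m2*mt3 + 2*α*ε ^ 2*m1*mt3 ^ 2 - 4*α*γ*ε ^ 2*mt3*p1 + 2*α*γ*ε ^ 3*mt3 ^ 2*p2 + 2*α*γ*ε ^ 3*m2*mt3*pt3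 + α*γ*ε ^ 4*m1*mt3 ^ 2*pt3 + α*γ*ε ^ 4*m1*mt3 ^ 2*p3 - 2*α ^ 2*ε ^ 3*m2*mt3 ^ 3 - α ^ 2*ε ^ 4*m1*mt3 ^ 4 - 2*α ^ 2*γ*ε ^ 3*mt3 ^ 2*p2 - α ^ 2*γ*ε ^ 4*m1*mt3 ^ 2*pt3 - α ^ 2*γ*ε ^ 4*m1*mt3 ^ 2*p3 + 2*α ^ 3*ε ^ 3*m2*mt3 ^ 3 + 2*α ^ 3*ε ^ 4*m1*mt3 ^ 4 - α ^ 4*ε ^ 4*m1*mt3 ^ 4) := by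
    linear_combination ((1 - γ*ε ^ 2*p3 + α ^ 2*ε ^ 2*mt3 ^ 2)) * hm1 - ((ε*mt3 - α*ε*mt3 - α*γ*ε ^ 3*mt3*p3 + α ^ 2*ε ^ 3*mt3 ^ 3 - α ^ 3*ε ^ 3*mt3 ^ 3)) * hm2 + ((γ*ε ^ 2*mt3 - 2*α*γ*ε ^ 2*mt3)) * hp1 - ((-γ*ε + γ ^ 2*ε ^ 3*p3 - α*γ*ε ^ 3*mt3 ^ 2 + α ^ 2*γ*ε ^ 3*mt3 ^ 2)) * hp2
  have hF2 : ((1 + ε ^ 2*α*(1 - α)*mt3 ^ 2 - ε ^ 2*γ*p3) ^ 2 + ε ^ 2*mt3 ^ 2*(2*α - 1) ^ 2) * mt2 = (m2 + 2*ε*m1*mt3 - ε ^ 2*m2*mt3 ^ 2 - 2*γ*ε*p1 + 2*γ*ε ^ 2*mt3*p2 + γ*ε ^ 2*m2*pt3 - γ*ε ^ 2*m2*p3 + γ*ε ^ 3*m1*mt3*pt3 - γ*ε ^ 3*m1*mt3*p3 + 2*γ ^ 2*ε ^ 3*p1*p3 - γ ^ 2*ε ^ 4*m2*p3*pt3 -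 2*α*ε*m1*mt3 + 2*α*ε ^ 2*m2*mt3 ^ 2 - 4*α*γ*ε ^ 2*mt3*p2 - 2*α*γ*ε ^ 3*mt3 ^ 2*p1 - 2*α*γ*ε ^ 3*m1*mt3*pt3 + α*γ*ε ^ 4*m2*mt3 ^ 2*pt3 + α*γ*ε ^ 4*m2*mt3 ^ 2*p3 + 2*α ^ 2*ε ^ 3*m1*mt3 ^ 3 - α ^ 2*ε ^ 4*m2*mt3 ^ 4 + 2*α ^ 2*γ*ε ^ 3*mt3 ^ 2*p1 - α ^ 2*γ*ε ^ 4*m2*mt3 ^ 2*pt3 - α ^ 2*γ*ε ^ 4*m2*mt3 ^ 2*p3 - 2*α ^ 3*ε ^ 3*m1*mt3 ^ 3 + 2*α ^ 3*ε ^ 4*m2*mt3 ^ 4 - α ^ 4*ε ^ 4*m2*mt3 ^ 4) := by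
    linear_combination ((ε*mt3 - α*ε*mt3 - α*γ*ε ^ 3*mt3*p3 + α ^ 2*ε ^ 3*mt3 ^ 3 - α ^ 3*ε ^ 3*mt3 ^ 3)) * hm1 + ((1 - γ*ε ^ 2*p3 + α ^ 2*ε ^ 2*mt3 ^ 2)) * hm2 + ((-γ*ε + γ ^ 2*ε ^ 3*p3 - α*γ*ε ^ 3*mt3 ^ 2 + α ^ 2*γ*ε ^ 3*mt3 ^ 2)) * hp1 + ((γ*ε ^ 2*mt3 - 2*α*γ*ε ^ 2*mt3)) * hp2
  have hF3 : ((1 + ε ^ 2*α*(1 - α)*mt3 ^ 2 - ε ^ 2*γ*p3) ^ 2 + ε ^ 2*mt3 ^ 2*(2*α - 1) ^ 2) * pt1 = (p1 - ε*m2*pt3 - ε*m2*p3 + ε ^ 2*mt3 ^ 2*p1 - 2*ε ^ 2*m1*mt3*p3 - ε ^ 3*m2*mt3 ^ 2*pt3 + ε ^ 3*m2*mt3 ^ 2*p3 - 2*γ*ε ^ 3*mt3*p2*p3 + γ*ε ^ 3*m2*p3*pt3 + γ*ε ^ 3*m2*p3 ^ 2 - γ*ε ^ 4*m1*mt3*p3*pt3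 + γ*ε ^ 4*m1*mt3*p3 ^ 2 - γ ^ 2*ε ^ 4*p1*p3 ^ 2 + 2*α*ε*mt3*p2 - 2*α*ε ^ 2*mt3 ^ 2*p1 + α*ε ^ 2*m1*mt3*pt3 + 3*α*ε ^ 2*m1*mt3*p3 + 2*α*ε ^ 3*mt3 ^ 3*p2 + 2*α*ε ^ 3*m2*mt3 ^ 2*pt3 - 4*α*ε ^ 3*m2*mt3 ^ 2*p3 + α*ε ^ 4*m1*mt3 ^ 3*pt3 - α*ε ^ 4*m1*mt3 ^ 3*p3 + 2*α*γ*ε ^ 3*mt3*p2*p3 + 2*α*γ*ε ^ 4*mt3 ^ 2*p1*p3 + α*γ*ε ^ 4*m1*mt3*p3*pt3 - α*γ*ε ^ 4*m1*mt3*p3 ^ 2 - 4*α ^ 2*ε ^ 3*mt3 ^ 3*p2 - α ^ 2*ε ^ 3*m2*mt3 ^ 2*pt3 + 3*α ^ 2*ε ^ 3*m2*mt3 ^ 2*p3 - α ^ 2*ε ^ 4*mt3 ^ 4*p1 - 2*α ^ 2*ε ^ 4*m1*mt3 ^ 3*pt3 + 2*α ^ 2*ε ^ 4*m1*mt3 ^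 3*p3 - 2*α ^ 2*γ*ε ^ 4*mt3 ^ 2*p1*p3 + 2*α ^ 3*ε ^ 3*mt3 ^ 3*p2 + 2*α ^ 3*ε ^ 4*mt3 ^ 4*p1 + α ^ 3*ε ^ 4*m1*mt3 ^ 3*pt3 - α ^ 3*ε ^ 4*m1*mt3 ^ 3*p3 - α ^ 4*ε ^ 4*mt3 ^ 4*p1) := by
    linear_combination ((-ε ^ 2*mt3*p3 + 2*α*ε ^ 2*mt3*p3)) * hm1 - ((ε*p3 - γ*ε ^ 3*p3 ^ 2 + α*ε ^ 3*mt3 ^ 2*p3 - α ^ 2*ε ^ 3*mt3 ^ 2*p3)) * hm2 + ((1 + ε ^ 2*mt3 ^ 2 - γ*ε ^ 2*p3 - 2*α*ε ^ 2*mt3 ^ 2 + α ^ 2*ε ^ 2*mt3 ^ 2)) * hp1 - ((γ*ε ^ 3*mt3*p3 - α*ε*mt3 - α*ε ^ 3*mt3 ^ 3 - α*γ*ε ^ 3*mt3*p3 + 2*α ^ 2*ε ^ 3*mt3 ^ 3 - α ^ 3*ε ^ 3*mt3 ^ 3)) * hp2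
  have hF4 : ((1 + ε ^ 2*α*(1 - α)*mt3 ^ 2 - ε ^ 2*γ*p3) ^ 2 + ε ^ 2*mt3 ^ 2*(2*α - 1) ^ 2) * pt2 = (p2 + ε*m1*pt3 + ε*m1*p3 + ε ^ 2*mt3 ^ 2*p2 - 2*ε ^ 2*m2*mt3*p3 + ε ^ 3*m1*mt3 ^ 2*pt3 - ε ^ 3*m1*mt3 ^ 2*p3 + 2*γ*ε ^ 3*mt3*p1*p3 - γ*ε ^ 3*m1*p3*pt3 - γ*ε ^ 3*m1*p3 ^ 2 - γ*ε ^ 4*m2*mt3*p3*pt3 + γ*ε ^ 4*m2*mt3*p3 ^ 2 - γ ^ 2*ε ^ 4*p2*p3 ^ 2 - 2*α*ε*mt3*p1 - 2*α*ε ^ 2*mt3 ^ 2*p2 + α*ε ^ 2*m2*mt3*pt3 + 3*α*ε ^ 2*m2*mt3*p3 - 2*α*ε ^ 3*mt3 ^ 3*p1 - 2*α*ε ^ 3*m1*mt3 ^ 2*pt3 + 4*α*ε ^ 3*m1*mt3 ^ 2*p3 + α*ε ^ 4*m2*mt3 ^ 3*pt3 - α*ε ^ 4*m2*mt3 ^ 3*p3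 - 2*α*γ*ε ^ 3*mt3*p1*p3 + 2*α*γ*ε ^ 4*mt3 ^ 2*p2*p3 + α*γ*ε ^ 4*m2*mt3*p3*pt3 - α*γ*ε ^ 4*m2*mt3*p3 ^ 2 + 4*α ^ 2*ε ^ 3*mt3 ^ 3*p1 + α ^ 2*ε ^ 3*m1*mt3 ^ 2*pt3 - 3*α ^ 2*ε ^ 3*m1*mt3 ^ 2*p3 - α ^ 2*ε ^ 4*mt3 ^ 4*p2 - 2*α ^ 2*ε ^ 4*m2*mt3 ^ 3*pt3 + 2*α ^ 2*ε ^ 4*m2*mt3 ^ 3*p3 - 2*α ^ 2*γ*ε ^ 4*mt3 ^ 2*p2*p3 - 2*α ^ 3*ε ^ 3*mt3 ^ 3*p1 + 2*α ^ 3*ε ^ 4*mt3 ^ 4*p2 + α ^ 3*ε ^ 4*m2*mt3 ^ 3*pt3 - α ^ 3*ε ^ 4*m2*mt3 ^ 3*p3 - α ^ 4*ε ^ 4*mt3 ^ 4*p2) := by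
    linear_combination ((ε*p3 - γ*ε ^ 3*p3 ^ 2 + α*ε ^ 3*mt3 ^ 2*p3 - α ^ 2*ε ^ 3*mt3 ^ 2*p3)) * hm1 + ((-ε ^ 2*mt3*p3 + 2*α*ε ^ 2*mt3*p3)) * hm2 + ((γ*ε ^ 3*mt3*p3 - α*ε*mt3 - α*ε ^ 3*mt3 ^ 3 - α*γ*ε ^ 3*mt3*p3 + 2*α ^ 2*ε ^ 3*mt3 ^ 3 - α ^ 3*ε ^ 3*mt3 ^ 3)) * hp1 + ((1 + ε ^ 2*mt3 ^ 2 - γ*ε ^ 2*p3 - 2*α*ε ^ 2*mt3 ^ 2 + α ^ 2*ε ^ 2*mt3 ^ 2)) * hp2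
  have hC3 : ((1 + ε ^ 2*α*(1 - α)*mt3 ^ 2 - ε ^ 2*γ*p3) ^ 2 + ε ^ 2*mt3 ^ 2*(2*α - 1) ^ 2) * (pt3 - p3) = (2*ε*m2*p1 - 2*ε*m1*p2 + 2*ε ^ 2*m2*mt3*p2 - ε ^ 2*m2 ^ 2*pt3 - ε ^ 2*m2 ^ 2*p3 + 2*ε ^ 2*m1*mt3*p1 - ε ^ 2*m1 ^ 2*pt3 - ε ^ 2*m1 ^ 2*p3 - ε ^ 4*m2 ^ 2*mt3 ^ 2*pt3 + ε ^ 4*m2 ^ 2*mt3 ^ 2*p3 - ε ^ 4*m1 ^ 2*mt3 ^ 2*pt3 + ε ^ 4*m1 ^ 2*mt3 ^ 2*p3 - 2*γ*ε ^ 2*p2 ^ 2 - 2*γ*ε ^ 2*p1 ^ 2 + γ*ε ^ 3*m2*p1*pt3 - γ*ε ^ 3*m2*p1*p3 - γ*ε ^ 3*m1*p2*pt3 + γ*ε ^ 3*m1*p2*p3 + γ*ε ^ 4*m2*mt3*p2*pt3 - 3*γ*ε ^ 4*m2*mt3*p2*p3 + γ*ε ^ 4*m2 ^ 2*p3*pt3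 + γ*ε ^ 4*m2 ^ 2*p3 ^ 2 + γ*ε ^ 4*m1*mt3*p1*pt3 - 3*γ*ε ^ 4*m1*mt3*p1*p3 + γ*ε ^ 4*m1 ^ 2*p3*pt3 + γ*ε ^ 4*m1 ^ 2*p3 ^ 2 + 2*γ ^ 2*ε ^ 4*p2 ^ 2*p3 + 2*γ ^ 2*ε ^ 4*p1 ^ 2*p3 - γ ^ 2*ε ^ 5*m2*p1*p3*pt3 - γ ^ 2*ε ^ 5*m2*p1*p3 ^ 2 + γ ^ 2*ε ^ 5*m1*p2*p3*pt3 + γ ^ 2*ε ^ 5*m1*p2*p3 ^ 2 + 2*α*ε ^ 4*m2*mt3 ^ 3*p2 + 2*α*ε ^ 4*m2 ^ 2*mt3 ^ 2*pt3 - 4*α*ε ^ 4*m2 ^ 2*mt3 ^ 2*p3 + 2*α*ε ^ 4*m1*mt3 ^ 3*p1 + 2*α*ε ^ 4*m1 ^ 2*mt3 ^ 2*pt3 - 4*α*ε ^ 4*m1 ^ 2*mt3 ^ 2*p3 - 2*α*γ*ε ^ 4*mt3 ^ 2*p2 ^ 2 - 2*α*γ*ε ^ 4*mt3 ^ 2*p1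 ^ 2 - 2*α*γ*ε ^ 4*m2*mt3*p2*pt3 + 2*α*γ*ε ^ 4*m2*mt3*p2*p3 - 2*α*γ*ε ^ 4*m1*mt3*p1*pt3 + 2*α*γ*ε ^ 4*m1*mt3*p1*p3 + α*γ*ε ^ 5*m2*mt3 ^ 2*p1*pt3 + 3*α*γ*ε ^ 5*m2*mt3 ^ 2*p1*p3 - α*γ*ε ^ 5*m1*mt3 ^ 2*p2*pt3 - 3*α*γ*ε ^ 5*m1*mt3 ^ 2*p2*p3 - 2*α ^ 2*ε ^ 4*m2*mt3 ^ 3*p2 - α ^ 2*ε ^ 4*m2 ^ 2*mt3 ^ 2*pt3 + 3*α ^ 2*ε ^ 4*m2 ^ 2*mt3 ^ 2*p3 - 2*α ^ 2*ε ^ 4*m1*mt3 ^ 3*p1 - α ^ 2*ε ^ 4*m1 ^ 2*mt3 ^ 2*pt3 + 3*α ^ 2*ε ^ 4*m1 ^ 2*mt3 ^ 2*p3 - 2*α ^ 2*ε ^ 5*m2*mt3 ^ 4*p1 + 2*α ^ 2*ε ^ 5*m1*mt3 ^ 4*p2 + 2*α ^ 2*γ*ε ^ 4*mt3 ^ 2*p2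 ^ 2 + 2*α ^ 2*γ*ε ^ 4*mt3 ^ 2*p1 ^ 2 - α ^ 2*γ*ε ^ 5*m2*mt3 ^ 2*p1*pt3 - 3*α ^ 2*γ*ε ^ 5*m2*mt3 ^ 2*p1*p3 + α ^ 2*γ*ε ^ 5*m1*mt3 ^ 2*p2*pt3 + 3*α ^ 2*γ*ε ^ 5*m1*mt3 ^ 2*p2*p3 + 4*α ^ 3*ε ^ 5*m2*mt3 ^ 4*p1 - 4*α ^ 3*ε ^ 5*m1*mt3 ^ 4*p2 - 2*α ^ 4*ε ^ 5*m2*mt3 ^ 4*p1 + 2*α ^ 4*ε ^ 5*m1*mt3 ^ 4*p2) := by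
    linear_combination ((1 + ε ^ 2*α*(1 - α)*mt3 ^ 2 - ε ^ 2*γ*p3) ^ 2 + ε ^ 2*mt3 ^ 2*(2*α - 1) ^ 2) * hp3 + ε*p1 * hF2 + ε*m2 * hF3 - ε*p2 * hF1 - ε*m1 * hF4
  have hDD : ((1 + ε ^ 2*α*(1 - α)*mt3 ^ 2 - ε ^ 2*γ*p3) ^ 2 + ε ^ 2*mt3 ^ 2*(2*α - 1) ^ 2) ≠ 0 := by
    have h1 : 0 < (1 + ε ^ 2*α*(1 - α)*mt3 ^ 2 - ε ^ 2*γ*p3) ^ 2 := lt_of_le_of_ne (sq_nonneg _) (Ne.symm (pow_ne_zero 2 hΔ))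
    have h2 : 0 ≤ ε ^ 2*mt3 ^ 2*(2*α - 1) ^ 2 := by positivity
    nlinarith
  have key1' : ((1 + ε ^ 2*α*(1 - α)*mt3 ^ 2 - ε ^ 2*γ*p3) ^ 2 + ε ^ 2*mt3 ^ 2*(2*α - 1) ^ 2) * ((1 + ε ^ 2*α*(1 - α)*mt3 ^ 2 - ε ^ 2*γ*p3) * ((mt1*p1 - m1*pt1) + (mt2*p2 - m2*pt2)) + ((2*α - 1)*mt3 + ε ^ 2*(α - 1)*mt3*(m1 ^ 2 + m2 ^ 2) + ε ^ 2*γ*(m1*p1 + m2*p2)) * (p3 - pt3)) = 0 := by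
    linear_combination ((1 + ε ^ 2*α*(1 - α)*mt3 ^ 2 - ε ^ 2*γ*p3)*p1) * hF1 + ((1 + ε ^ 2*α*(1 - α)*mt3 ^ 2 - ε ^ 2*γ*p3)*p2) * hF2 - ((1 + ε ^ 2*α*(1 - α)*mt3 ^ 2 - ε ^ 2*γ*p3)*m1) * hF3 - ((1 + ε ^ 2*α*(1 - α)*mt3 ^ 2 - ε ^ 2*γ*p3)*m2) * hF4 + ((mt3 - 2*α*mt3)) * hC3
  have key1 : (1 + ε ^ 2*α*(1 - α)*mt3 ^ 2 - ε ^ 2*γ*p3) * ((mt1*p1 - m1*pt1) + (mt2*p2 - m2*pt2)) + ((2*α - 1)*mt3 + ε ^ 2*(α - 1)*mt3*(m1 ^ 2 + m2 ^ 2) + ε ^ 2*γ*(m1*p1 + m2*p2)) * (p3 - pt3) = 0 :=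
    (mul_eq_zero.mp key1').resolve_left hDD
  have hN1 : mt1 ^ 2 + mt2 ^ 2 - (m1 ^ 2 + m2 ^ 2) = ε*γ*((m1 + mt1)*(p2 + pt2) - (m2 + mt2)*(p1 + pt1)) := by
    linear_combination (m1 + mt1) * hm1 + (m2 + mt2) * hm2
  have hkey3 : (mt1 - m1)*(p1 + pt1) + (mt2 - m2)*(p2 + pt2) = -(ε*(α - 1)*mt3*((m1 + mt1)*(p2 + pt2) - (m2 + mt2)*(p1 + pt1))) := by
    linear_combination (p1 + pt1) * hm1 + (p2 + pt2) * hm2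
  have key2 : ((2*α - 1)*mt3 + ε ^ 2*(α - 1)*mt3*(mt1 ^ 2 + mt2 ^ 2) + ε ^ 2*γ*(mt1*pt1 + mt2*pt2)) * (1 + ε ^ 2*α*(1 - α)*mt3 ^ 2 - ε ^ 2*γ*p3) - ((2*α - 1)*mt3 + ε ^ 2*(α - 1)*mt3*(m1 ^ 2 + m2 ^ 2) + ε ^ 2*γ*(m1*p1 + m2*p2)) * (1 + ε ^ 2*α*(1 - α)*mt3 ^ 2 - ε ^ 2*γ*pt3) = 0 := by
    linear_combination (ε ^ 2*(α - 1)*mt3*(1 + ε ^ 2*α*(1 - α)*mt3 ^ 2 - ε ^ 2*γ*p3)) * hN1 + (ε ^ 2*γ*(1 + ε ^ 2*α*(1 - α)*mt3 ^ 2 - ε ^ 2*γ*p3)) * hkey3 - (ε ^ 2*γ) * key1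
  constructor
  · rw [dLTb3]
    rw [div_mul_eq_mul_div, add_div' _ _ _ (mul_ne_zero hm3ne hΔ)]
    refine div_eq_zero_iff.mpr (Or.inl ?_)
    linear_combination mt3 * key1
  · rw [dLTb3, dLTb3, div_eq_div_iff (mul_ne_zero hm3ne hΔt) (mul_ne_zero hm3ne hΔ)]
    linear_combination mt3 * key2
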